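/- arXiv:1904.02374 — 2 statements merged into one kernel-verified Lean document; each statement's English description precedes it below -/
import Mathlib

section
/- Let O be a discrete valuation ring with uniformizer ϖ, Γ a group, S a finite index set, and for each v ∈ S a subgroup Γ_v of Γ. Let M be a free O-module with O-linear Γ-action; for r ≥ 1 write M_r = M/ϖ^r M, and for a, b ≥ 1 view M_a inside M_{a+b} via the injective Γ-equivariant map given by multiplication by ϖ^b. Fix a, b ≥ 1, and for each v ∈ S and each r ∈ {a, b, a+b} let Z_{r,v} be a subgroup of the group of 1-cocycles Z^1(Γ_v, M_r) containing all 1-coboundaries, such that: multiplication by ϖ^b maps Z_{a,v} into Z_{a+b,v}; reduction modulo ϖ^b maps Z_{a+b,v} onto Z_{b,v}; and every element of Z_{a+b,v} whose reduction modulo ϖ^b is the zero cocycle equals ϖ^b·ξ for some ξ ∈ Z_{a,v}. Call a 1-cocycle z ∈ Z^1(Γ, M_r) Selmer if for every v ∈ S the restriction of z to Γ_v lies in Z_{r,v}. Then: (1) for every Selmer cocycle z' ∈ Z^1(Γ, M_a), the reduction of ϖ^b·z' modulo ϖ^b is a 1-coboundary (indeed zero); and (2) if z ∈ Z^1(Γ,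 M_{a+b}) is a Selmer cocycle whose reduction modulo ϖ^b is a 1-coboundary of Γ with values in M_b, then there exist a Selmer cocycle z' ∈ Z^1(Γ, M_a) and a 1-coboundary β ∈ B^1(Γ, M_{a+b}) with ϖ^b·z' = z + β. Equivalently, the induced sequence of Selmer groups H^1_{L_a}(Γ, M_a) → H^1_{L_{a+b}}(Γ, M_{a+b}) → H^1_{L_b}(Γ, M_b) is exact at the middle term. (This is the purely group-cohomological content of the first exact sequence of Lemma 7.1 of the paper, where Γ is the Galois group Γ_{F,S} and the Γ_v are decomposition groups.) -/
/-- A function `z : Γ → M` represents a 1-cocycle of `Γ` with values in `M/ϖ^r M`: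
the cocycle identity holds modulo `ϖ^r M`. -/
def IsCocycleMod {O Γ M : Type*} [CommRing O] [Group Γ] [AddCommGroup M] [Module O M]
    [DistribMulAction Γ M] (ϖ : O) (r : ℕ) (z : Γ → M) : Prop :=
  ∀ g h : Γ, ∃ v : M, z (g * h) - (z g + g • z h) = ϖ ^ r • v

/-- A function `z : Γ → M` represents a 1-coboundary of `Γ` with values in `M/ϖ^r M`. -/
def IsCoboundaryMod {O Γ M : Type*} [CommRing O] [Group Γ] [AddCommGroup M] [Module O M]
    [DistribMulAction Γ M] (ϖ : O) (r : ℕ) (z : Γ → M) : Prop :=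
  ∃ w : M, ∀ g : Γ, ∃ v : M, z g - (g • w - w) = ϖ ^ r • v

/-- **Lemma 7.1 (first exact sequence, group-cohomological content).**
Let `O` be a DVR with uniformizer `ϖ`, `Γ` a group, `S` a finite index set of subgroups
`Γ_v ≤ Γ`, and `M` a free `O`-module with `O`-linear `Γ`-action.  Cocycles with values in
`M/ϖ^r M` are represented by functions into `M` satisfying the cocycle identity mod `ϖ^r`, and
`M/ϖ^a M` sits inside `M/ϖ^(a+b) M` via multiplication by `ϖ^b`.  Given local conditions
`Z_{r,v} ⊆ Z¹(Γ_v, M/ϖ^r M)` (subgroups containing coboundaries) for `r ∈ {a, b, a+b}`,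
compatible as stated, the sequence of Selmer groups
`H¹_{L_a} → H¹_{L_{a+b}} → H¹_{L_b}` is exact at the middle term. -/
theorem selmer_sequence_exact
    (O : Type*) [CommRing O] [IsDomain O] [IsDiscreteValuationRing O]
    (ϖ : O) (hϖ : Irreducible ϖ)
    (Γ : Type*) [Group Γ]
    (S : Type*) [Finite S] (Γv : S → Subgroup Γ)
    (M : Type*) [AddCommGroup M] [Module O M] [Module.Free O M]
    [DistribMulAction Γ M] [SMulCommClass Γ O M]
    (a b : ℕ) (ha : 1 ≤ a) (hb : 1 ≤ b)
    (Za Zb Zab : ∀ v : S, Set ((Γv v) → M))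
    -- the local conditions consist of 1-cocycles (modulo the respective power of ϖ)
    (hZa_coc : ∀ v, ∀ f ∈ Za v, ∀ γ δ : Γv v,
      ∃ w : M, f (γ * δ) - (f γ + (γ : Γ) • f δ) = ϖ ^ a • w)
    (hZb_coc : ∀ v, ∀ f ∈ Zb v, ∀ γ δ : Γv v,
      ∃ w : M, f (γ * δ) - (f γ + (γ : Γ) • f δ) = ϖ ^ b • w)
    (hZab_coc : ∀ v, ∀ f ∈ Zab v, ∀ γ δ : Γv v,
      ∃ w : M, f (γ * δ) - (f γ + (γ : Γ) • f δ) = ϖ ^ (a + b) • w)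
    -- the local conditions are subgroups
    (hZa_add : ∀ v, ∀ f ∈ Za v, ∀ f' ∈ Za v, f + f' ∈ Za v)
    (hZa_neg : ∀ v, ∀ f ∈ Za v, -f ∈ Za v)
    (hZb_add : ∀ v, ∀ f ∈ Zb v, ∀ f' ∈ Zb v, f + f' ∈ Zb v)
    (hZb_neg : ∀ v, ∀ f ∈ Zb v, -f ∈ Zb v)
    (hZab_add : ∀ v, ∀ f ∈ Zab v, ∀ f' ∈ Zab v, f + f' ∈ Zab v)
    (hZab_neg : ∀ v, ∀ f ∈ Zab v, -f ∈ Zab v)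
    -- the local conditions are well defined modulo the respective power of ϖ
    (hZa_sat : ∀ v, ∀ f ∈ Za v, ∀ u : (Γv v) → M,
      (∀ γ, ∃ w : M, u γ = ϖ ^ a • w) → f + u ∈ Za v)
    (hZb_sat : ∀ v, ∀ f ∈ Zb v, ∀ u : (Γv v) → M,
      (∀ γ, ∃ w : M, u γ = ϖ ^ b • w) → f + u ∈ Zb v)
    (hZab_sat : ∀ v, ∀ f ∈ Zab v, ∀ u : (Γv v) → M,
      (∀ γ, ∃ w : M, u γ = ϖ ^ (a + b) • w) → f + u ∈ Zab v)
    -- the local conditions contain all 1-coboundaries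
    (hZa_cob : ∀ v, ∀ w : M, (fun γ : Γv v => (γ : Γ) • w - w) ∈ Za v)
    (hZb_cob : ∀ v, ∀ w : M, (fun γ : Γv v => (γ : Γ) • w - w) ∈ Zb v)
    (hZab_cob : ∀ v, ∀ w : M, (fun γ : Γv v => (γ : Γ) • w - w) ∈ Zab v)
    -- multiplication by ϖ^b maps Z_{a,v} into Z_{a+b,v}
    (hmul : ∀ v, ∀ f ∈ Za v, (fun γ => ϖ ^ b • f γ) ∈ Zab v)
    -- reduction modulo ϖ^b maps Z_{a+b,v} onto Z_{b,v}
    (hred_into : ∀ v, ∀ f ∈ Zab v, f ∈ Zb v)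
    (hred_onto : ∀ v, ∀ f ∈ Zb v, ∃ f' ∈ Zab v, ∀ γ, ∃ w : M, f' γ - f γ = ϖ ^ b • w)
    -- elements of Z_{a+b,v} reducing to zero mod ϖ^b are ϖ^b times elements of Z_{a,v}
    (hker : ∀ v, ∀ f ∈ Zab v, (∀ γ, ∃ w : M, f γ = ϖ ^ b • w) →
      ∃ ξ ∈ Za v, ∀ γ, f γ = ϖ ^ b • ξ γ) :
    -- (1) for a Selmer cocycle z' at level a, the reduction of ϖ^b·z' mod ϖ^b is zero
    (∀ z' : Γ → M, IsCocycleMod ϖ a z' →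
      (∀ v, (fun γ : Γv v => z' ↑γ) ∈ Za v) →
      ∀ g : Γ, ∃ w : M, ϖ ^ b • z' g = ϖ ^ b • w) ∧
    -- (2) a Selmer cocycle at level a+b whose reduction mod ϖ^b is a coboundary comes,
    -- up to a coboundary, from a Selmer cocycle at level a
    (∀ z : Γ → M, IsCocycleMod ϖ (a + b) z →
      (∀ v, (fun γ : Γv v => z ↑γ) ∈ Zab v) →
      IsCoboundaryMod ϖ b z →
      ∃ z' : Γ → M, IsCocycleMod ϖ a z' ∧
        (∀ v, (fun γ : Γv v => z' ↑γ) ∈ Za v) ∧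
        ∃ w : M, ∀ g : Γ, ∃ u : M,
          ϖ ^ b • z' g - (z g + (g • w - w)) = ϖ ^ (a + b) • u) := by
  have hinj : Function.Injective (fun m : M => ϖ ^ b • m) :=
    smul_right_injective M (pow_ne_zero b hϖ.ne_zero)
  constructor
  · intro z' _ _ g
    exact ⟨z' g, rfl⟩
  · intro z hz hsel ⟨w₀, hw₀⟩
    have hv : ∀ g : Γ, ∃ v : M, z g + (g • (-w₀) - (-w₀)) = ϖ ^ b • v := by
      intro g
      obtain ⟨v, hvv⟩ := hw₀ g
      refine ⟨v, ?_⟩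
      rw [smul_neg, ← hvv]; abel
    choose z' hz' using hv
    have key : ∀ g h : Γ, (g * h) • (-w₀ : M) - -w₀ =
        (g • -w₀ - -w₀) + g • (h • -w₀ - -w₀) := by
      intro g h
      rw [mul_smul, smul_sub]
      abel
    refine ⟨z', ?_, ?_, -w₀, ?_⟩
    · intro g h
      obtain ⟨u, hu⟩ := hz g h
      refine ⟨u, hinj ?_⟩
      show ϖ ^ b • (z' (g * h) - (z' g + g • z' h)) = ϖ ^ b • (ϖ ^ a • u)
      have e1 : ϖ ^ b • (z' (g*h) - (z' g + g • z' h)) =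
          z (g*h) - (z g + g • z h) := by
        rw [smul_sub, smul_add, ← hz' (g*h), ← hz' g, ← smul_comm g (ϖ ^ b), ← hz' h,
          smul_add, key g h]
        abel
      rw [e1, hu, ← mul_smul, ← pow_add, Nat.add_comm a b]
    · intro v
      have hmem : (fun γ : Γv v => z ↑γ + ((γ : Γ) • (-w₀) - (-w₀))) ∈ Zab v :=
        hZab_add v _ (hsel v) _ (hZab_cob v (-w₀))
      obtain ⟨ξ, hξ, hξ2⟩ := hker v _ hmem (fun γ => ⟨z' γ, hz' γ⟩)
      have : (fun γ : Γv v => z' ↑γ) = ξ := by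
        funext γ
        refine hinj ?_
        show ϖ ^ b • z' (γ : Γ) = ϖ ^ b • ξ γ
        rw [← hz' (γ : Γ), hξ2 γ]
      rw [this]; exact hξ
    · intro g
      refine ⟨0, ?_⟩
      rw [← hz' g]
      simp
end

section
/- Let O be a discrete valuation ring with uniformizer ϖ, Γ a group, S a finite index set with subgroups Γ_v ≤ Γ for v ∈ S, and n ≥ 2 an integer. Let M and M' be two free O-modules with O-linear Γ-action, each equipped, for every 0 < r ≤ n and every v ∈ S, with subgroups of local cocycles Z_{r,v} ⊆ Z^1(Γ_v, M/ϖ^r M) (respectively Z'_{r,v} ⊆ Z^1(Γ_v, M'/ϖ^r M')) containing all 1-coboundaries and satisfying, for all a, b ≥ 1 with a + b ≤ n: multiplication by ϖ^b maps the level-a local condition injectively into the level-(a+b) one, reduction modulo ϖ^b maps the level-(a+b) local condition onto the level-b one, and every element of the level-(a+b) condition reducing to zero is ϖ^b times an element of the level-a condition. Define the Selmer group H^1_{L_r}(Γ, M/ϖ^r M) as the image in H^1(Γ, M/ϖ^r M) of those 1-cocycles whose restriction to every Γ_v lies in Z_{r,v}, and similarly for M'. Assume: (i) (M/ϖM)^Γ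 = 0 and (M'/ϖM')^Γ = 0; and (ii) for every 0 < r ≤ n the Selmer groups H^1_{L_r}(Γ, M/ϖ^r M) and H^1_{L'_r}(Γ, M'/ϖ^r M') are finite of equal cardinality. Then the relative Selmer groups — the image of H^1_{L_n}(Γ, M/ϖ^n M) → H^1_{L_1}(Γ, M/ϖM) under the map induced by reduction modulo ϖ, and the corresponding image for M' — are finite of equal cardinality. (This is the purely group-cohomological content of Lemma 7.3 of the paper, where M' is the Tate dual of M and hypothesis (ii) is the 'balanced' condition of Definition 7.2.) -/
/-- `z` represents a Selmer 1-cocycle of level `r`: it is a 1-cocycle with values in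
`M/ϖ^r M` whose restriction to each local subgroup `Γ_v` lies in the local condition `Z v`. -/
def IsSelmerCocycle {O Γ S M : Type*} [CommRing O] [Group Γ] [AddCommGroup M] [Module O M]
    [DistribMulAction Γ M] (ϖ : O) (Γv : S → Subgroup Γ) (r : ℕ)
    (Z : ∀ v : S, Set ((Γv v) → M)) (z : Γ → M) : Prop :=
  IsCocycleMod ϖ r z ∧ ∀ v : S, (fun γ : Γv v => z ↑γ) ∈ Z v

/-- Two Selmer cocycles are identified when their difference is a 1-coboundary with values in
`M/ϖ^r M`. -/
def selmerRel {O Γ S M : Type*} [CommRing O] [Group Γ] [AddCommGroup M] [Module O M]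
    [DistribMulAction Γ M] (ϖ : O) (Γv : S → Subgroup Γ) (r : ℕ)
    (Z : ∀ v : S, Set ((Γv v) → M))
    (z z' : {z : Γ → M // IsSelmerCocycle ϖ Γv r Z z}) : Prop :=
  IsCoboundaryMod ϖ r (z.1 - z'.1)

/-- The Selmer group `H¹_{L_r}(Γ, M/ϖ^r M)`: Selmer cocycles modulo coboundaries. -/
def SelmerGroup {O Γ S M : Type*} [CommRing O] [Group Γ] [AddCommGroup M] [Module O M]
    [DistribMulAction Γ M] (ϖ : O) (Γv : S → Subgroup Γ) (r : ℕ)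
    (Z : ∀ v : S, Set ((Γv v) → M)) : Type _ :=
  Quot (selmerRel ϖ Γv r Z)

/-- The relative Selmer group: the image of the level-`n` Selmer group in the level-`1`
Selmer group under the map induced by reduction modulo `ϖ` (on representing cocycles,
reduction is the identity). -/
def relSelmerSet {O Γ S M : Type*} [CommRing O] [Group Γ] [AddCommGroup M] [Module O M]
    [DistribMulAction Γ M] (ϖ : O) (Γv : S → Subgroup Γ) (n : ℕ)
    (Z1 Zn : ∀ v : S, Set ((Γv v) → M)) : Set (SelmerGroup ϖ Γv 1 Z1) :=
  {c | ∃ z : {z : Γ → M // IsSelmerCocycle ϖ Γv 1 Z1 z},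
        Quot.mk (selmerRel ϖ Γv 1 Z1) z = c ∧ IsSelmerCocycle ϖ Γv n Zn z.1}

section Aux
variable {O Γ S M : Type*} [CommRing O] [Group Γ] [AddCommGroup M] [Module O M]
  [DistribMulAction Γ M]

lemma cobMod_zero (ϖ : O) (r : ℕ) : IsCoboundaryMod (Γ := Γ) ϖ r (0 : Γ → M) :=
  ⟨0, fun _ => ⟨0, by simp⟩⟩

lemma cobMod_add {ϖ : O} {r : ℕ} {f f' : Γ → M} (h : IsCoboundaryMod ϖ r f)
    (h' : IsCoboundaryMod ϖ r f') : IsCoboundaryMod ϖ r (f + f') := by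
  obtain ⟨w, hw⟩ := h; obtain ⟨w', hw'⟩ := h'
  refine ⟨w + w', fun g => ?_⟩
  obtain ⟨v, hv⟩ := hw g; obtain ⟨v', hv'⟩ := hw' g
  refine ⟨v + v', ?_⟩
  have e : (f + f') g - (g • (w + w') - (w + w'))
      = (f g - (g • w - w)) + (f' g - (g • w' - w')) := by
    simp only [Pi.add_apply, smul_add]; abel
  rw [e, hv, hv', smul_add]

lemma cobMod_neg {ϖ : O} {r : ℕ} {f : Γ → M} (h : IsCoboundaryMod ϖ r f) :
    IsCoboundaryMod ϖ r (-f) := by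
  obtain ⟨w, hw⟩ := h
  refine ⟨-w, fun g => ?_⟩
  obtain ⟨v, hv⟩ := hw g
  refine ⟨-v, ?_⟩
  have e : (-f) g - (g • (-w) - (-w)) = -(f g - (g • w - w)) := by
    simp only [Pi.neg_apply, smul_neg]; abel
  rw [e, hv, smul_neg]

lemma cobMod_anti {ϖ : O} {r s : ℕ} (hrs : r ≤ s) {f : Γ → M} (h : IsCoboundaryMod ϖ s f) :
    IsCoboundaryMod ϖ r f := by
  obtain ⟨w, hw⟩ := h
  refine ⟨w, fun g => ?_⟩
  obtain ⟨v, hv⟩ := hw g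
  exact ⟨ϖ ^ (s - r) • v, by rw [hv, smul_smul, ← pow_add, Nat.add_sub_cancel' hrs]⟩

lemma cocMod_anti {ϖ : O} {r s : ℕ} (hrs : r ≤ s) {f : Γ → M} (h : IsCocycleMod ϖ s f) :
    IsCocycleMod ϖ r f := by
  intro g h'
  obtain ⟨v, hv⟩ := h g h'
  exact ⟨ϖ ^ (s - r) • v, by rw [hv, smul_smul, ← pow_add, Nat.add_sub_cancel' hrs]⟩

lemma selmerRel_equivalence (ϖ : O) (Γv : S → Subgroup Γ) (r : ℕ)
    (Z : ∀ v : S, Set ((Γv v) → M)) : Equivalence (selmerRel ϖ Γv r Z) := by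
  constructor
  · intro z; unfold selmerRel; rw [sub_self]; exact cobMod_zero ϖ r
  · intro a b h; unfold selmerRel at *; rw [← neg_sub]; exact cobMod_neg h
  · intro a b c h h'; unfold selmerRel at *; rw [← sub_add_sub_cancel a.1 b.1 c.1]
    exact cobMod_add h h'

lemma selmer_mk_eq (ϖ : O) (Γv : S → Subgroup Γ) (r : ℕ) (Z : ∀ v : S, Set ((Γv v) → M))
    (a b : {z : Γ → M // IsSelmerCocycle ϖ Γv r Z z}) :
    Quot.mk (selmerRel ϖ Γv r Z) a = Quot.mk (selmerRel ϖ Γv r Z) b ↔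
      IsCoboundaryMod ϖ r (a.1 - b.1) := by
  rw [Quot.eq]
  exact (selmerRel_equivalence ϖ Γv r Z).eqvGen_iff

end Aux
section Maps
variable {O Γ S M : Type*} [CommRing O] [Group Γ] [AddCommGroup M] [Module O M]
  [DistribMulAction Γ M]
variable (ϖ : O) (Γv : S → Subgroup Γ)

/-- Selmer cocycles of level `r`. -/
abbrev SCoc (r : ℕ) (Z : ∀ v : S, Set ((Γv v) → M)) :=
  {z : Γ → M // IsSelmerCocycle ϖ Γv r Z z}

def cocAdd (r : ℕ) (Z : ∀ v : S, Set ((Γv v) → M))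
    (hZadd : ∀ v, ∀ f ∈ Z v, ∀ f' ∈ Z v, f + f' ∈ Z v)
    (a b : SCoc ϖ Γv r Z) : SCoc ϖ Γv r Z :=
  ⟨a.1 + b.1, fun g h => by
    obtain ⟨v1, h1⟩ := a.2.1 g h; obtain ⟨v2, h2⟩ := b.2.1 g h
    refine ⟨v1 + v2, ?_⟩
    have e : (a.1 + b.1) (g*h) - ((a.1 + b.1) g + g • (a.1 + b.1) h)
        = (a.1 (g*h) - (a.1 g + g • a.1 h)) + (b.1 (g*h) - (b.1 g + g • b.1 h)) := by
      simp only [Pi.add_apply, smul_add]; abel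
    rw [e, h1, h2, smul_add],
   fun v => hZadd v _ (a.2.2 v) _ (b.2.2 v)⟩

def cocNeg (r : ℕ) (Z : ∀ v : S, Set ((Γv v) → M))
    (hZneg : ∀ v, ∀ f ∈ Z v, -f ∈ Z v)
    (a : SCoc ϖ Γv r Z) : SCoc ϖ Γv r Z :=
  ⟨-a.1, fun g h => by
    obtain ⟨v1, h1⟩ := a.2.1 g h
    refine ⟨-v1, ?_⟩
    have e : (-a.1) (g*h) - ((-a.1) g + g • (-a.1) h)
        = -(a.1 (g*h) - (a.1 g + g • a.1 h)) := by
      simp only [Pi.neg_apply, smul_neg]; abel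
    rw [e, h1, smul_neg],
   fun v => hZneg v _ (a.2.2 v)⟩

def zeroSCoc (r : ℕ) (Z : ∀ v : S, Set ((Γv v) → M))
    (hZ0 : ∀ v, (0 : (Γv v) → M) ∈ Z v) : SCoc ϖ Γv r Z :=
  ⟨0, fun _ _ => ⟨0, by simp⟩, fun v => hZ0 v⟩

def redCoc (m : ℕ) (Z1 Zn : ∀ v : S, Set ((Γv v) → M))
    (hred : ∀ v, ∀ f ∈ Zn v, f ∈ Z1 v) (z : SCoc ϖ Γv (m+1) Zn) : SCoc ϖ Γv 1 Z1 :=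
  ⟨z.1, cocMod_anti (Nat.le_add_left 1 m) z.2.1, fun v => hred v _ (z.2.2 v)⟩

def selmerRed (m : ℕ) (Z1 Zn : ∀ v : S, Set ((Γv v) → M))
    (hred : ∀ v, ∀ f ∈ Zn v, f ∈ Z1 v) :
    SelmerGroup ϖ Γv (m+1) Zn → SelmerGroup ϖ Γv 1 Z1 :=
  Quot.lift (fun z => Quot.mk _ (redCoc ϖ Γv m Z1 Zn hred z))
    (fun _ _ hab => Quot.sound (cobMod_anti (Nat.le_add_left 1 m) hab))

def selmerTrans (r : ℕ) (Z : ∀ v : S, Set ((Γv v) → M))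
    (hZadd : ∀ v, ∀ f ∈ Z v, ∀ f' ∈ Z v, f + f' ∈ Z v) (a : SCoc ϖ Γv r Z) :
    SelmerGroup ϖ Γv r Z → SelmerGroup ϖ Γv r Z :=
  Quot.lift (fun z => Quot.mk _ (cocAdd ϖ Γv r Z hZadd z a))
    (fun x y hxy => Quot.sound (by
      show IsCoboundaryMod ϖ r ((x.1 + a.1) - (y.1 + a.1))
      rwa [add_sub_add_right_eq_sub]))

lemma selmerTrans_left_inv (r : ℕ) (Z : ∀ v : S, Set ((Γv v) → M))
    (hZadd : ∀ v, ∀ f ∈ Z v, ∀ f' ∈ Z v, f + f' ∈ Z v)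
    (hZneg : ∀ v, ∀ f ∈ Z v, -f ∈ Z v) (a : SCoc ϖ Γv r Z) (x : SelmerGroup ϖ Γv r Z) :
    selmerTrans ϖ Γv r Z hZadd (cocNeg ϖ Γv r Z hZneg a)
      (selmerTrans ϖ Γv r Z hZadd a x) = x := by
  induction x using Quot.ind with
  | _ z => exact congrArg (Quot.mk _) (Subtype.ext (add_neg_cancel_right z.1 a.1))

lemma selmerTrans_right_inv (r : ℕ) (Z : ∀ v : S, Set ((Γv v) → M))
    (hZadd : ∀ v, ∀ f ∈ Z v, ∀ f' ∈ Z v, f + f' ∈ Z v)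
    (hZneg : ∀ v, ∀ f ∈ Z v, -f ∈ Z v) (a : SCoc ϖ Γv r Z) (x : SelmerGroup ϖ Γv r Z) :
    selmerTrans ϖ Γv r Z hZadd a
      (selmerTrans ϖ Γv r Z hZadd (cocNeg ϖ Γv r Z hZneg a) x) = x := by
  induction x using Quot.ind with
  | _ z => exact congrArg (Quot.mk _) (Subtype.ext (neg_add_cancel_right z.1 a.1))

variable [SMulCommClass Γ O M]

def scaleCoc (m : ℕ) (Zm Zn : ∀ v : S, Set ((Γv v) → M))
    (hZmul : ∀ v, ∀ f ∈ Zm v, (fun γ => ϖ • f γ) ∈ Zn v)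
    (u : SCoc ϖ Γv m Zm) : SCoc ϖ Γv (m+1) Zn :=
  ⟨fun g => ϖ • u.1 g, fun g h => by
    obtain ⟨v, hv⟩ := u.2.1 g h
    refine ⟨v, ?_⟩
    have e : ϖ • u.1 (g*h) - (ϖ • u.1 g + g • ϖ • u.1 h)
        = ϖ • (u.1 (g*h) - (u.1 g + g • u.1 h)) := by
      rw [smul_comm g ϖ (u.1 h), smul_sub, smul_add]
    rw [e, hv, smul_smul, ← pow_succ'],
   fun v => hZmul v _ (u.2.2 v)⟩

def selmerScale (m : ℕ) (Zm Zn : ∀ v : S, Set ((Γv v) → M))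
    (hZmul : ∀ v, ∀ f ∈ Zm v, (fun γ => ϖ • f γ) ∈ Zn v) :
    SelmerGroup ϖ Γv m Zm → SelmerGroup ϖ Γv (m+1) Zn :=
  Quot.lift (fun u => Quot.mk _ (scaleCoc ϖ Γv m Zm Zn hZmul u))
    (fun a b hab => Quot.sound (by
      obtain ⟨w, hw⟩ := hab
      refine ⟨ϖ • w, fun g => ?_⟩
      obtain ⟨v, hv⟩ := hw g
      refine ⟨v, ?_⟩
      have hv2 : a.1 g - b.1 g - (g • w - w) = ϖ ^ m • v := hv
      show ϖ • a.1 g - ϖ • b.1 g - (g • (ϖ • w) - ϖ • w) = ϖ ^ (m+1) • v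
      have e : ϖ • a.1 g - ϖ • b.1 g - (g • (ϖ • w) - ϖ • w)
          = ϖ • (a.1 g - b.1 g - (g • w - w)) := by
        simp only [smul_comm g ϖ w, smul_sub]
      rw [e, hv2, smul_smul, ← pow_succ']))

end Maps
lemma selmer_key {O Γ S M : Type*} [CommRing O] [IsDomain O] [Group Γ] [AddCommGroup M]
    [Module O M] [NoZeroSMulDivisors O M] [DistribMulAction Γ M] [SMulCommClass Γ O M]
    (ϖ : O) (hϖ0 : ϖ ≠ 0) (Γv : S → Subgroup Γ) (m : ℕ)
    (Z1 Zm Zn : ∀ v : S, Set ((Γv v) → M))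
    (hZadd : ∀ v, ∀ f ∈ Zn v, ∀ f' ∈ Zn v, f + f' ∈ Zn v)
    (hZneg : ∀ v, ∀ f ∈ Zn v, -f ∈ Zn v)
    (hZ01 : ∀ v, (0 : (Γv v) → M) ∈ Z1 v)
    (hZcobn : ∀ v, ∀ w : M, (fun γ : Γv v => (γ : Γ) • w - w) ∈ Zn v)
    (hZmul : ∀ v, ∀ f ∈ Zm v, (fun γ => ϖ • f γ) ∈ Zn v)
    (hZred : ∀ v, ∀ f ∈ Zn v, f ∈ Z1 v)
    (hZker : ∀ v, ∀ f ∈ Zn v, (∀ γ, ∃ w : M, f γ = ϖ • w) →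
      ∃ ξ ∈ Zm v, ∀ γ, f γ = ϖ • ξ γ)
    (hfix : ∀ x : M, (∀ g : Γ, ∃ v : M, g • x - x = ϖ • v) → ∃ v : M, x = ϖ • v) :
    Nat.card (relSelmerSet ϖ Γv (m+1) Z1 Zn) * Nat.card (SelmerGroup ϖ Γv m Zm)
      = Nat.card (SelmerGroup ϖ Γv (m+1) Zn) := by
  classical
  let φ : SelmerGroup ϖ Γv (m+1) Zn → SelmerGroup ϖ Γv 1 Z1 :=
    selmerRed ϖ Γv m Z1 Zn hZred
  let zc : SelmerGroup ϖ Γv 1 Z1 := Quot.mk _ (zeroSCoc ϖ Γv 1 Z1 hZ01)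
  -- Step 1: the relative Selmer set is the range of φ
  have hrange : relSelmerSet ϖ Γv (m+1) Z1 Zn = Set.range φ := by
    ext c; constructor
    · rintro ⟨z, rfl, hzn⟩
      refine ⟨Quot.mk _ ⟨z.1, hzn⟩, ?_⟩
      exact congrArg (Quot.mk _) (Subtype.ext rfl)
    · rintro ⟨x, rfl⟩
      obtain ⟨z, rfl⟩ := Quot.exists_rep x
      exact ⟨redCoc ϖ Γv m Z1 Zn hZred z, rfl, z.2⟩
  -- Step 2: ψ maps the level-m Selmer group bijectively onto the kernel of φ
  let ψ : SelmerGroup ϖ Γv m Zm → SelmerGroup ϖ Γv (m+1) Zn :=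
    selmerScale ϖ Γv m Zm Zn hZmul
  have hψmem : ∀ u, φ (ψ u) = zc := by
    intro u
    induction u using Quot.ind with
    | _ u =>
      show Quot.mk (selmerRel ϖ Γv 1 Z1)
          (redCoc ϖ Γv m Z1 Zn hZred (scaleCoc ϖ Γv m Zm Zn hZmul u))
        = Quot.mk (selmerRel ϖ Γv 1 Z1) (zeroSCoc ϖ Γv 1 Z1 hZ01)
      rw [selmer_mk_eq]
      refine ⟨0, fun g => ⟨u.1 g, ?_⟩⟩
      show ϖ • u.1 g - 0 - (g • (0 : M) - 0) = ϖ ^ 1 • u.1 g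
      simp [pow_one]
  have hψinj : Function.Injective ψ := by
    intro a b hab
    induction a using Quot.ind with
    | _ a =>
    induction b using Quot.ind with
    | _ b =>
    have hab' : Quot.mk (selmerRel ϖ Γv (m+1) Zn) (scaleCoc ϖ Γv m Zm Zn hZmul a)
        = Quot.mk (selmerRel ϖ Γv (m+1) Zn) (scaleCoc ϖ Γv m Zm Zn hZmul b) := hab
    rw [selmer_mk_eq] at hab'
    obtain ⟨w, hw⟩ := hab'
    have hwfix : ∃ w' : M, w = ϖ • w' := by
      apply hfix
      intro g
      obtain ⟨v, hv⟩ := hw g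
      have hv2 : ϖ • a.1 g - ϖ • b.1 g - (g • w - w) = ϖ ^ (m+1) • v := hv
      refine ⟨a.1 g - b.1 g - ϖ ^ m • v, ?_⟩
      have e : g • w - w = (ϖ • a.1 g - ϖ • b.1 g) - ϖ ^ (m+1) • v := by
        rw [← hv2]; abel
      rw [e, smul_sub, smul_sub, smul_smul, ← pow_succ']
    obtain ⟨w', hw'⟩ := hwfix
    apply Quot.sound
    refine ⟨w', fun g => ?_⟩
    obtain ⟨v, hv⟩ := hw g
    have hv2 : ϖ • a.1 g - ϖ • b.1 g - (g • w - w) = ϖ ^ (m+1) • v := hv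
    refine ⟨v, ?_⟩
    apply smul_right_injective M hϖ0
    show ϖ • ((a.1 - b.1) g - (g • w' - w')) = ϖ • (ϖ ^ m • v)
    have expand : ϖ • ((a.1 - b.1) g - (g • w' - w'))
        = (ϖ • a.1 g - ϖ • b.1 g) - (g • (ϖ • w') - ϖ • w') := by
      simp only [Pi.sub_apply, smul_sub, smul_comm g ϖ w']
    rw [expand, ← hw', hv2, smul_smul, ← pow_succ']
  have hψsurj : ∀ x : SelmerGroup ϖ Γv (m+1) Zn, φ x = zc → ∃ u, ψ u = x := by
    intro x hx
    obtain ⟨z, rfl⟩ := Quot.exists_rep x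
    have hx' : Quot.mk (selmerRel ϖ Γv 1 Z1) (redCoc ϖ Γv m Z1 Zn hZred z)
        = Quot.mk (selmerRel ϖ Γv 1 Z1) (zeroSCoc ϖ Γv 1 Z1 hZ01) := hx
    rw [selmer_mk_eq] at hx'
    obtain ⟨w, hw⟩ := hx'
    choose u hu using hw
    have hu' : ∀ g : Γ, z.1 g - (g • w - w) = ϖ • u g := by
      intro g
      have h1 : (z.1 - (0 : Γ → M)) g - (g • w - w) = ϖ ^ 1 • u g := hu g
      simpa [pow_one] using h1
    have hucoc : IsCocycleMod ϖ m u := by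
      intro g h
      obtain ⟨v, hv⟩ := z.2.1 g h
      refine ⟨v, ?_⟩
      apply smul_right_injective M hϖ0
      show ϖ • (u (g*h) - (u g + g • u h)) = ϖ • (ϖ ^ m • v)
      have f1 : z.1 (g*h) = ϖ • u (g*h) + ((g*h) • w - w) := by rw [← hu' (g*h)]; abel
      have f2 : z.1 g = ϖ • u g + (g • w - w) := by rw [← hu' g]; abel
      have f3 : z.1 h = ϖ • u h + (h • w - w) := by rw [← hu' h]; abel
      have key : ϖ • (u (g*h) - (u g + g • u h))
          = z.1 (g*h) - (z.1 g + g • z.1 h) := by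
        rw [f1, f2, f3]
        simp only [mul_smul, smul_add, smul_sub, smul_comm g ϖ]
        abel
      rw [key, hv, smul_smul, ← pow_succ']
    have huloc : ∀ v, (fun γ : Γv v => u ↑γ) ∈ Zm v := by
      intro v
      have hmem : (fun γ : Γv v => ϖ • u ↑γ) ∈ Zn v := by
        have h1 : (fun γ : Γv v => ϖ • u ↑γ)
            = (fun γ : Γv v => z.1 ↑γ) + (-(fun γ : Γv v => (↑γ : Γ) • w - w)) := by
          funext γ
          show ϖ • u ↑γ = z.1 ↑γ + -((↑γ : Γ) • w - w)
          rw [← hu' ↑γ]; abel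
        rw [h1]
        exact hZadd v _ (z.2.2 v) _ (hZneg v _ (hZcobn v w))
      obtain ⟨ξ, hξ, hξ'⟩ := hZker v _ hmem (fun γ => ⟨u ↑γ, rfl⟩)
      have e : (fun γ : Γv v => u ↑γ) = ξ := by
        funext γ
        exact smul_right_injective M hϖ0 (hξ' γ)
      rw [e]; exact hξ
    refine ⟨Quot.mk _ ⟨u, hucoc, huloc⟩, ?_⟩
    show Quot.mk (selmerRel ϖ Γv (m+1) Zn)
        (scaleCoc ϖ Γv m Zm Zn hZmul ⟨u, hucoc, huloc⟩) = Quot.mk _ z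
    rw [selmer_mk_eq]
    refine ⟨-w, fun g => ⟨0, ?_⟩⟩
    show ϖ • u g - z.1 g - (g • (-w) - (-w)) = ϖ ^ (m+1) • 0
    rw [smul_zero, smul_neg, ← hu' g]
    abel
  -- Step 3: product decomposition of the level-(m+1) Selmer group
  have hrep : ∀ c : Set.range φ, ∃ z : SCoc ϖ Γv (m+1) Zn, φ (Quot.mk _ z) = c.1 := by
    rintro ⟨c, x, rfl⟩
    obtain ⟨z, rfl⟩ := Quot.exists_rep x
    exact ⟨z, rfl⟩
  choose rep hrepspec using hrep
  have hL1 : ∀ (a : SCoc ϖ Γv (m+1) Zn) (x), φ x = zc →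
      φ (selmerTrans ϖ Γv (m+1) Zn hZadd a x) = φ (Quot.mk _ a) := by
    intro a x hx
    obtain ⟨z, rfl⟩ := Quot.exists_rep x
    have hx' : Quot.mk (selmerRel ϖ Γv 1 Z1) (redCoc ϖ Γv m Z1 Zn hZred z)
        = Quot.mk (selmerRel ϖ Γv 1 Z1) (zeroSCoc ϖ Γv 1 Z1 hZ01) := hx
    rw [selmer_mk_eq] at hx'
    show Quot.mk (selmerRel ϖ Γv 1 Z1)
        (redCoc ϖ Γv m Z1 Zn hZred (cocAdd ϖ Γv (m+1) Zn hZadd z a))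
      = Quot.mk (selmerRel ϖ Γv 1 Z1) (redCoc ϖ Γv m Z1 Zn hZred a)
    rw [selmer_mk_eq]
    have e : (z.1 + a.1) - a.1 = z.1 - (0 : Γ → M) := by
      funext g; simp
    show IsCoboundaryMod ϖ 1 ((z.1 + a.1) - a.1)
    rw [e]; exact hx'
  have hL2 : ∀ (a : SCoc ϖ Γv (m+1) Zn) (x), φ x = φ (Quot.mk _ a) →
      φ (selmerTrans ϖ Γv (m+1) Zn hZadd (cocNeg ϖ Γv (m+1) Zn hZneg a) x) = zc := by
    intro a x hx
    obtain ⟨z, rfl⟩ := Quot.exists_rep x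
    have hx' : Quot.mk (selmerRel ϖ Γv 1 Z1) (redCoc ϖ Γv m Z1 Zn hZred z)
        = Quot.mk (selmerRel ϖ Γv 1 Z1) (redCoc ϖ Γv m Z1 Zn hZred a) := hx
    rw [selmer_mk_eq] at hx'
    show Quot.mk (selmerRel ϖ Γv 1 Z1)
        (redCoc ϖ Γv m Z1 Zn hZred
          (cocAdd ϖ Γv (m+1) Zn hZadd z (cocNeg ϖ Γv (m+1) Zn hZneg a)))
      = Quot.mk (selmerRel ϖ Γv 1 Z1) (zeroSCoc ϖ Γv 1 Z1 hZ01)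
    rw [selmer_mk_eq]
    have e : (z.1 + -a.1) - (0 : Γ → M) = z.1 - a.1 := by
      funext g; simp [sub_eq_add_neg]
    show IsCoboundaryMod ϖ 1 ((z.1 + -a.1) - 0)
    rw [e]; exact hx'
  let K := {x : SelmerGroup ϖ Γv (m+1) Zn // φ x = zc}
  let F : (Set.range φ) × K → SelmerGroup ϖ Γv (m+1) Zn :=
    fun p => selmerTrans ϖ Γv (m+1) Zn hZadd (rep p.1) p.2.1
  have hFφ : ∀ p, φ (F p) = p.1.1 := by
    intro p
    rw [← hrepspec p.1]
    exact hL1 (rep p.1) p.2.1 p.2.2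
  have hFinj : Function.Injective F := by
    intro p q hpq
    have h1 : p.1 = q.1 := Subtype.ext (by rw [← hFφ p, ← hFφ q, hpq])
    have e1 : selmerTrans ϖ Γv (m+1) Zn hZadd (cocNeg ϖ Γv (m+1) Zn hZneg (rep p.1))
        (F p) = p.2.1 :=
      selmerTrans_left_inv ϖ Γv (m+1) Zn hZadd hZneg (rep p.1) p.2.1
    have e2 : selmerTrans ϖ Γv (m+1) Zn hZadd (cocNeg ϖ Γv (m+1) Zn hZneg (rep q.1))
        (F q) = q.2.1 :=
      selmerTrans_left_inv ϖ Γv (m+1) Zn hZadd hZneg (rep q.1) q.2.1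
    have h2 : p.2.1 = q.2.1 := by
      calc p.2.1 = selmerTrans ϖ Γv (m+1) Zn hZadd
              (cocNeg ϖ Γv (m+1) Zn hZneg (rep p.1)) (F p) := e1.symm
        _ = selmerTrans ϖ Γv (m+1) Zn hZadd
              (cocNeg ϖ Γv (m+1) Zn hZneg (rep q.1)) (F q) := by rw [hpq, h1]
        _ = q.2.1 := e2
    exact Prod.ext h1 (Subtype.ext h2)
  have hFsurj : Function.Surjective F := by
    intro x
    have hc : φ x ∈ Set.range φ := ⟨x, rfl⟩
    have hk : φ (selmerTrans ϖ Γv (m+1) Zn hZadd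
        (cocNeg ϖ Γv (m+1) Zn hZneg (rep ⟨φ x, hc⟩)) x) = zc :=
      hL2 (rep ⟨φ x, hc⟩) x (hrepspec ⟨φ x, hc⟩).symm
    refine ⟨⟨⟨φ x, hc⟩, ⟨_, hk⟩⟩, ?_⟩
    exact selmerTrans_right_inv ϖ Γv (m+1) Zn hZadd hZneg (rep ⟨φ x, hc⟩) x
  -- Step 4: counting
  have hcardK : Nat.card (SelmerGroup ϖ Γv m Zm) = Nat.card K := by
    apply Nat.card_eq_of_bijective (fun u => (⟨ψ u, hψmem u⟩ : K))
    constructor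
    · intro a b hab
      exact hψinj (congrArg Subtype.val hab)
    · rintro ⟨x, hx⟩
      obtain ⟨u, hu⟩ := hψsurj x hx
      exact ⟨u, Subtype.ext hu⟩
  calc Nat.card (relSelmerSet ϖ Γv (m+1) Z1 Zn) * Nat.card (SelmerGroup ϖ Γv m Zm)
      = Nat.card (Set.range φ) * Nat.card K := by rw [hrange, hcardK]
    _ = Nat.card ((Set.range φ) × K) := (Nat.card_prod _ _).symm
    _ = Nat.card (SelmerGroup ϖ Γv (m+1) Zn) :=
        Nat.card_eq_of_bijective F ⟨hFinj, hFsurj⟩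

/-- **Lemma 7.3 (group-cohomological content).**  With balanced local conditions at every
level `0 < r ≤ n` for two free `O`-modules `M`, `M'` with `O`-linear `Γ`-action whose mod-`ϖ`
invariants vanish, the relative Selmer groups of `M` and `M'` are finite of equal
cardinality. -/
theorem relative_selmer_balanced
    (O : Type*) [CommRing O] [IsDomain O] [IsDiscreteValuationRing O]
    (ϖ : O) (hϖ : Irreducible ϖ)
    (Γ : Type*) [Group Γ]
    (S : Type*) [Finite S] (Γv : S → Subgroup Γ)
    (n : ℕ) (hn : 2 ≤ n)
    (M : Type*) [AddCommGroup M] [Module O M] [Module.Free O M]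
    [DistribMulAction Γ M] [SMulCommClass Γ O M]
    (M' : Type*) [AddCommGroup M'] [Module O M'] [Module.Free O M']
    [DistribMulAction Γ M'] [SMulCommClass Γ O M']
    (Z : ℕ → ∀ v : S, Set ((Γv v) → M))
    (Z' : ℕ → ∀ v : S, Set ((Γv v) → M'))
    -- the local conditions consist of 1-cocycles
    (hZcoc : ∀ r, 0 < r → r ≤ n → ∀ v, ∀ f ∈ Z r v, ∀ γ δ : Γv v,
      ∃ w : M, f (γ * δ) - (f γ + (γ : Γ) • f δ) = ϖ ^ r • w)
    (hZ'coc : ∀ r, 0 < r → r ≤ n → ∀ v, ∀ f ∈ Z' r v, ∀ γ δ : Γv v,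
      ∃ w : M', f (γ * δ) - (f γ + (γ : Γ) • f δ) = ϖ ^ r • w)
    -- the local conditions are subgroups, well defined modulo the respective power of ϖ
    (hZadd : ∀ r, 0 < r → r ≤ n → ∀ v, ∀ f ∈ Z r v, ∀ f' ∈ Z r v, f + f' ∈ Z r v)
    (hZneg : ∀ r, 0 < r → r ≤ n → ∀ v, ∀ f ∈ Z r v, -f ∈ Z r v)
    (hZsat : ∀ r, 0 < r → r ≤ n → ∀ v, ∀ f ∈ Z r v, ∀ u : (Γv v) → M,
      (∀ γ, ∃ w : M, u γ = ϖ ^ r • w) → f + u ∈ Z r v)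
    (hZ'add : ∀ r, 0 < r → r ≤ n → ∀ v, ∀ f ∈ Z' r v, ∀ f' ∈ Z' r v, f + f' ∈ Z' r v)
    (hZ'neg : ∀ r, 0 < r → r ≤ n → ∀ v, ∀ f ∈ Z' r v, -f ∈ Z' r v)
    (hZ'sat : ∀ r, 0 < r → r ≤ n → ∀ v, ∀ f ∈ Z' r v, ∀ u : (Γv v) → M',
      (∀ γ, ∃ w : M', u γ = ϖ ^ r • w) → f + u ∈ Z' r v)
    -- the local conditions contain all 1-coboundaries
    (hZcob : ∀ r, 0 < r → r ≤ n → ∀ v, ∀ w : M,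
      (fun γ : Γv v => (γ : Γ) • w - w) ∈ Z r v)
    (hZ'cob : ∀ r, 0 < r → r ≤ n → ∀ v, ∀ w : M',
      (fun γ : Γv v => (γ : Γ) • w - w) ∈ Z' r v)
    -- compatibilities between levels: multiplication by ϖ^b, reduction, and kernels
    (hZmul : ∀ a b, 1 ≤ a → 1 ≤ b → a + b ≤ n → ∀ v, ∀ f ∈ Z a v,
      (fun γ => ϖ ^ b • f γ) ∈ Z (a + b) v)
    (hZred_into : ∀ a b, 1 ≤ a → 1 ≤ b → a + b ≤ n → ∀ v, ∀ f ∈ Z (a + b) v, f ∈ Z b v)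
    (hZred_onto : ∀ a b, 1 ≤ a → 1 ≤ b → a + b ≤ n → ∀ v, ∀ f ∈ Z b v,
      ∃ f' ∈ Z (a + b) v, ∀ γ, ∃ w : M, f' γ - f γ = ϖ ^ b • w)
    (hZker : ∀ a b, 1 ≤ a → 1 ≤ b → a + b ≤ n → ∀ v, ∀ f ∈ Z (a + b) v,
      (∀ γ, ∃ w : M, f γ = ϖ ^ b • w) → ∃ ξ ∈ Z a v, ∀ γ, f γ = ϖ ^ b • ξ γ)
    (hZ'mul : ∀ a b, 1 ≤ a → 1 ≤ b → a + b ≤ n → ∀ v, ∀ f ∈ Z' a v,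
      (fun γ => ϖ ^ b • f γ) ∈ Z' (a + b) v)
    (hZ'red_into : ∀ a b, 1 ≤ a → 1 ≤ b → a + b ≤ n → ∀ v, ∀ f ∈ Z' (a + b) v, f ∈ Z' b v)
    (hZ'red_onto : ∀ a b, 1 ≤ a → 1 ≤ b → a + b ≤ n → ∀ v, ∀ f ∈ Z' b v,
      ∃ f' ∈ Z' (a + b) v, ∀ γ, ∃ w : M', f' γ - f γ = ϖ ^ b • w)
    (hZ'ker : ∀ a b, 1 ≤ a → 1 ≤ b → a + b ≤ n → ∀ v, ∀ f ∈ Z' (a + b) v,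
      (∀ γ, ∃ w : M', f γ = ϖ ^ b • w) → ∃ ξ ∈ Z' a v, ∀ γ, f γ = ϖ ^ b • ξ γ)
    -- (i) the mod-ϖ invariants of M and M' vanish
    (hfix : ∀ x : M, (∀ g : Γ, ∃ v : M, g • x - x = ϖ • v) → ∃ v : M, x = ϖ • v)
    (hfix' : ∀ x : M', (∀ g : Γ, ∃ v : M', g • x - x = ϖ • v) → ∃ v : M', x = ϖ • v)
    -- (ii) the Selmer groups at each level 0 < r ≤ n are finite of equal cardinality
    (hbal : ∀ r, 0 < r → r ≤ n →
      Finite (SelmerGroup ϖ Γv r (Z r)) ∧ Finite (SelmerGroup ϖ Γv r (Z' r)) ∧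
      Nat.card (SelmerGroup ϖ Γv r (Z r)) = Nat.card (SelmerGroup ϖ Γv r (Z' r))) :
    (relSelmerSet ϖ Γv n (Z 1) (Z n)).Finite ∧
    (relSelmerSet ϖ Γv n (Z' 1) (Z' n)).Finite ∧
    Nat.card (relSelmerSet ϖ Γv n (Z 1) (Z n)) =
      Nat.card (relSelmerSet ϖ Γv n (Z' 1) (Z' n)) := by
  
  obtain ⟨m, rfl⟩ : ∃ m, n = m + 1 := ⟨n - 1, by omega⟩
  have hm : 1 ≤ m := by omega
  have hϖ0 : ϖ ≠ 0 := hϖ.ne_zero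
  -- zero local conditions
  have hZ0 : ∀ v, (0 : (Γv v) → M) ∈ Z 1 v := by
    intro v
    have h := hZcob 1 one_pos (by omega) v 0
    have e : (fun γ : Γv v => (γ : Γ) • (0 : M) - 0) = 0 := by funext γ; simp
    rwa [e] at h
  have hZ0m : ∀ v, (0 : (Γv v) → M) ∈ Z m v := by
    intro v
    have h := hZcob m (by omega) (by omega) v 0
    have e : (fun γ : Γv v => (γ : Γ) • (0 : M) - 0) = 0 := by funext γ; simp
    rwa [e] at h
  have hZ'0 : ∀ v, (0 : (Γv v) → M') ∈ Z' 1 v := by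
    intro v
    have h := hZ'cob 1 one_pos (by omega) v 0
    have e : (fun γ : Γv v => (γ : Γ) • (0 : M') - 0) = 0 := by funext γ; simp
    rwa [e] at h
  have hZ'0m : ∀ v, (0 : (Γv v) → M') ∈ Z' m v := by
    intro v
    have h := hZ'cob m (by omega) (by omega) v 0
    have e : (fun γ : Γv v => (γ : Γ) • (0 : M') - 0) = 0 := by funext γ; simp
    rwa [e] at h
  haveI : NoZeroSMulDivisors O M := ⟨fun {c x} h => or_iff_not_imp_left.2 fun hc =>
    smul_right_injective M hc (h.trans (smul_zero c).symm)⟩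
  haveI : NoZeroSMulDivisors O M' := ⟨fun {c x} h => or_iff_not_imp_left.2 fun hc =>
    smul_right_injective M' hc (h.trans (smul_zero c).symm)⟩
  have keyM : Nat.card (relSelmerSet ϖ Γv (m+1) (Z 1) (Z (m+1)))
      * Nat.card (SelmerGroup ϖ Γv m (Z m)) = Nat.card (SelmerGroup ϖ Γv (m+1) (Z (m+1))) := by
    apply selmer_key ϖ hϖ0 Γv m (Z 1) (Z m) (Z (m+1))
      (hZadd (m+1) (by omega) le_rfl) (hZneg (m+1) (by omega) le_rfl) hZ0
      (hZcob (m+1) (by omega) le_rfl)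
    · intro v f hf
      simpa [pow_one] using hZmul m 1 hm le_rfl le_rfl v f hf
    · intro v f hf
      exact hZred_into m 1 hm le_rfl le_rfl v f hf
    · intro v f hf hdiv
      obtain ⟨ξ, hξ, hξ'⟩ := hZker m 1 hm le_rfl le_rfl v f hf
        (fun γ => by obtain ⟨w, hw⟩ := hdiv γ; exact ⟨w, by simpa [pow_one] using hw⟩)
      exact ⟨ξ, hξ, fun γ => by simpa [pow_one] using hξ' γ⟩
    · exact hfix
  have keyM' : Nat.card (relSelmerSet ϖ Γv (m+1) (Z' 1) (Z' (m+1)))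
      * Nat.card (SelmerGroup ϖ Γv m (Z' m)) = Nat.card (SelmerGroup ϖ Γv (m+1) (Z' (m+1))) := by
    apply selmer_key ϖ hϖ0 Γv m (Z' 1) (Z' m) (Z' (m+1))
      (hZ'add (m+1) (by omega) le_rfl) (hZ'neg (m+1) (by omega) le_rfl) hZ'0
      (hZ'cob (m+1) (by omega) le_rfl)
    · intro v f hf
      simpa [pow_one] using hZ'mul m 1 hm le_rfl le_rfl v f hf
    · intro v f hf
      exact hZ'red_into m 1 hm le_rfl le_rfl v f hf
    · intro v f hf hdiv
      obtain ⟨ξ, hξ, hξ'⟩ := hZ'ker m 1 hm le_rfl le_rfl v f hf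
        (fun γ => by obtain ⟨w, hw⟩ := hdiv γ; exact ⟨w, by simpa [pow_one] using hw⟩)
      exact ⟨ξ, hξ, fun γ => by simpa [pow_one] using hξ' γ⟩
    · exact hfix'
  haveI hfin1 : Finite (SelmerGroup ϖ Γv 1 (Z 1)) := (hbal 1 one_pos (by omega)).1
  haveI hfin1' : Finite (SelmerGroup ϖ Γv 1 (Z' 1)) := (hbal 1 one_pos (by omega)).2.1
  refine ⟨Set.toFinite _, Set.toFinite _, ?_⟩
  haveI hfinm : Finite (SelmerGroup ϖ Γv m (Z m)) := (hbal m (by omega) (by omega)).1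
  haveI : Nonempty (SelmerGroup ϖ Γv m (Z m)) :=
    ⟨Quot.mk _ (zeroSCoc ϖ Γv m (Z m) hZ0m)⟩
  have hApos : 0 < Nat.card (SelmerGroup ϖ Γv m (Z m)) := Nat.card_pos
  have hA : Nat.card (SelmerGroup ϖ Γv m (Z m)) = Nat.card (SelmerGroup ϖ Γv m (Z' m)) :=
    (hbal m (by omega) (by omega)).2.2
  have hN : Nat.card (SelmerGroup ϖ Γv (m+1) (Z (m+1)))
      = Nat.card (SelmerGroup ϖ Γv (m+1) (Z' (m+1))) := (hbal (m+1) (by omega) le_rfl).2.2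
  apply Nat.eq_of_mul_eq_mul_right hApos
  rw [keyM, hN, ← keyM', hA]
end
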